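/- arXiv:1303.2725 — 4 statements merged into one kernel-verified Lean document; each statement's English description precedes it below -/
import Mathlib

section
/- Let h ∈ ℝᵐ have all nonzero entries with sign vector v, and let A be an m×k real matrix and B an n×k real matrix. Define f(g) = ‖h + A g‖₁ + ‖B g‖₁. Then g = 0 is a global minimum of f if and only if |vᵀ A g| ≤ ‖B g‖₁ for all g ∈ ℝᵏ. -/
open Finset in
/-- `g = 0` is a global minimum of `f(g) = ‖h + A g‖₁ + ‖B g‖₁` (all entries of `h`
nonzero, `v` the sign vector of `h`) iff `|vᵀ A g| ≤ ‖B g‖₁` for all `g`. -/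
theorem l1_global_min_iff {m n k : ℕ}
    (h : Fin m → ℝ) (hh : ∀ i, h i ≠ 0)
    (v : Fin m → ℝ) (hv : ∀ i, v i = Real.sign (h i))
    (A : Matrix (Fin m) (Fin k) ℝ) (B : Matrix (Fin n) (Fin k) ℝ)
    (f : (Fin k → ℝ) → ℝ)
    (hf : f = fun g => (∑ i, |h i + A.mulVec g i|) + ∑ j, |B.mulVec g j|) :
    (∀ g : Fin k → ℝ, f 0 ≤ f g) ↔
      ∀ g : Fin k → ℝ, |∑ i, v i * A.mulVec g i| ≤ ∑ j, |B.mulVec g j| := by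
  subst hf
  have hvsq : ∀ i, v i = 1 ∨ v i = -1 := by
    intro i
    rcases (hh i).lt_or_gt with hi | hi
    · right; rw [hv i, Real.sign_of_neg hi]
    · left; rw [hv i, Real.sign_of_pos hi]
  constructor
  · intro hmin g
    have key : ∀ g : Fin k → ℝ,
        -(∑ i, v i * A.mulVec g i) ≤ ∑ j, |B.mulVec g j| := by
      intro g
      rcases isEmpty_or_nonempty (Fin m) with hm | hm
      · simp only [Finset.univ_eq_empty, Finset.sum_empty, neg_zero]
        exact Finset.sum_nonneg fun j _ => abs_nonneg _
      set a := A.mulVec g with ha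
      set t : ℝ := Finset.univ.inf' Finset.univ_nonempty
        (fun i => |h i| / (|a i| + 1)) with ht
      have htpos : 0 < t := by
        rw [ht, Finset.lt_inf'_iff]
        intro i _
        have : 0 < |h i| := abs_pos.mpr (hh i)
        positivity
      have hta : ∀ i, t * |a i| ≤ |h i| := by
        intro i
        have h1 : t ≤ |h i| / (|a i| + 1) :=
          Finset.inf'_le _ (Finset.mem_univ i)
        have h2 : 0 < |a i| + 1 := by positivity
        have h3 : t * (|a i| + 1) ≤ |h i| := (le_div_iff₀ h2).mp h1
        nlinarith [abs_nonneg (a i)]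
      have habs : ∀ i, |h i + t * a i| = |h i| + t * (v i * a i) := by
        intro i
        have hba : t * a i ≤ t * |a i| :=
          mul_le_mul_of_nonneg_left (le_abs_self _) htpos.le
        have hba' : -(t * |a i|) ≤ t * a i := by
          have := mul_le_mul_of_nonneg_left (neg_abs_le (a i)) htpos.le
          linarith
        rcases (hh i).lt_or_gt with hi | hi
        · have hv1 : v i = -1 := by rw [hv i, Real.sign_of_neg hi]
          have hhi : |h i| = -h i := abs_of_neg hi
          have : h i + t * a i ≤ 0 := by
            have := hta i; linarith
          rw [abs_of_nonpos this, hv1]; ring_nf; linarith [hhi]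
        · have hv1 : v i = 1 := by rw [hv i, Real.sign_of_pos hi]
          have hhi : |h i| = h i := abs_of_pos hi
          have : 0 ≤ h i + t * a i := by
            have := hta i; linarith
          rw [abs_of_nonneg this, hv1]; ring_nf; linarith [hhi]
      have hmin' := hmin (t • g)
      simp only [Matrix.mulVec_zero, Matrix.mulVec_smul, Pi.zero_apply,
        Pi.smul_apply, smul_eq_mul, abs_zero, add_zero, Finset.sum_const_zero] at hmin'
      have e1 : ∑ i, |h i + t * a i| = ∑ i, |h i| + t * ∑ i, v i * a i := by
        rw [Finset.mul_sum, ← Finset.sum_add_distrib]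
        exact Finset.sum_congr rfl fun i _ => habs i
      have e2 : ∀ j, |t * B.mulVec g j| = t * |B.mulVec g j| := by
        intro j; rw [abs_mul, abs_of_pos htpos]
      have e3 : ∑ j, |t * B.mulVec g j| = t * ∑ j, |B.mulVec g j| := by
        rw [Finset.mul_sum]; exact Finset.sum_congr rfl fun j _ => e2 j
      rw [e1, e3] at hmin'
      have h4 : 0 ≤ t * (∑ i, v i * a i + ∑ j, |B.mulVec g j|) := by
        nlinarith
      nlinarith
    rw [abs_le]
    constructor
    · have := key g; linarith
    · have := key (-g)
      have e4 : A.mulVec (-g) = -A.mulVec g := by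
        rw [← Matrix.mulVec_neg]
      have e5 : B.mulVec (-g) = -B.mulVec g := by
        rw [← Matrix.mulVec_neg]
      simp only [e4, e5, Pi.neg_apply, mul_neg, Finset.sum_neg_distrib,
        abs_neg, neg_neg] at this
      linarith
  · intro hcond g
    have h1 : ∀ i, |h i| + v i * A.mulVec g i ≤ |h i + A.mulVec g i| := by
      intro i
      rcases (hh i).lt_or_gt with hi | hi
      · have hv1 : v i = -1 := by rw [hv i, Real.sign_of_neg hi]
        have hhi : |h i| = -h i := abs_of_neg hi
        have := neg_abs_le (h i + A.mulVec g i)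
        rw [hv1, hhi]; linarith
      · have hv1 : v i = 1 := by rw [hv i, Real.sign_of_pos hi]
        have hhi : |h i| = h i := abs_of_pos hi
        have := le_abs_self (h i + A.mulVec g i)
        rw [hv1, hhi]; linarith
    have h2 : ∑ i, (|h i| + v i * A.mulVec g i) ≤ ∑ i, |h i + A.mulVec g i| :=
      Finset.sum_le_sum fun i _ => h1 i
    rw [Finset.sum_add_distrib] at h2
    have h3 := hcond g
    have h4 : -(∑ j, |B.mulVec g j|) ≤ ∑ i, v i * A.mulVec g i := by
      have := neg_abs_le (∑ i, v i * A.mulVec g i); linarith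
    simp only [Matrix.mulVec_zero, Pi.zero_apply, abs_zero, add_zero,
      Finset.sum_const_zero]
    linarith
end

section
/- (Global minimality of the true channel under the ℓ1 identifiability condition, sufficiency direction.) Let h ∈ ℝᵐ have all nonzero entries with sign vector v, A an m×k real matrix, B an n×k real matrix. If |vᵀ A g| ≤ ‖B g‖₁ for all g ∈ ℝᵏ, then for all g ∈ ℝᵏ, ‖h + A g‖₁ + ‖B g‖₁ ≥ ‖h‖₁. -/
open Finset in
/-- Sufficiency: if `|vᵀ A g| ≤ ‖B g‖₁` for all `g` (with `v` the sign vector of the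
everywhere-nonzero `h`), then `‖h + A g‖₁ + ‖B g‖₁ ≥ ‖h‖₁` for all `g`. -/
theorem l1_identifiability_sufficient {m n k : ℕ}
    (h : Fin m → ℝ) (hh : ∀ i, h i ≠ 0)
    (v : Fin m → ℝ) (hv : ∀ i, v i = Real.sign (h i))
    (A : Matrix (Fin m) (Fin k) ℝ) (B : Matrix (Fin n) (Fin k) ℝ)
    (hcond : ∀ g : Fin k → ℝ, |∑ i, v i * A.mulVec g i| ≤ ∑ j, |B.mulVec g j|) :
    ∀ g : Fin k → ℝ, ∑ i, |h i| ≤ (∑ i, |h i + A.mulVec g i|) + ∑ j, |B.mulVec g j| := by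
  intro g
  have key : ∀ i, |h i| + v i * A.mulVec g i ≤ |h i + A.mulVec g i| := by
    intro i
    have h1 : v i * h i = |h i| := by
      rw [hv i]
      rcases lt_or_gt_of_ne (hh i) with hlt | hgt
      · rw [Real.sign_of_neg hlt, abs_of_neg hlt]; ring
      · rw [Real.sign_of_pos hgt, abs_of_pos hgt]; ring
    have h2 : |v i| = 1 := by
      rw [hv i]
      rcases lt_or_gt_of_ne (hh i) with hlt | hgt
      · rw [Real.sign_of_neg hlt]; norm_num
      · rw [Real.sign_of_pos hgt]; norm_num
    calc |h i| + v i * A.mulVec g i = v i * (h i + A.mulVec g i) := by rw [mul_add, h1]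
      _ ≤ |v i * (h i + A.mulVec g i)| := le_abs_self _
      _ = |h i + A.mulVec g i| := by rw [abs_mul, h2, one_mul]
  have s1 : ∑ i, |h i| + ∑ i, v i * A.mulVec g i ≤ ∑ i, |h i + A.mulVec g i| := by
    rw [← Finset.sum_add_distrib]
    exact Finset.sum_le_sum fun i _ => key i
  have s2 : -(∑ j, |B.mulVec g j|) ≤ ∑ i, v i * A.mulVec g i :=
    neg_le_of_abs_le (hcond g) |>.trans_eq rfl
  linarith
end

section
/- (Necessity direction.) Let h ∈ ℝᵐ have all nonzero entries with sign vector v, A an m×k real matrix, B an n×k real matrix. If ‖h + A g‖₁ + ‖B g‖₁ ≥ ‖h‖₁ for all g ∈ ℝᵏ, then |vᵀ A g| ≤ ‖B g‖₁ for all g ∈ ℝᵏ. -/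
open Finset in
lemma l1_identifiability_key {m n k : ℕ}
    (h : Fin m → ℝ) (hh : ∀ i, h i ≠ 0)
    (v : Fin m → ℝ) (hv : ∀ i, v i = Real.sign (h i))
    (A : Matrix (Fin m) (Fin k) ℝ) (B : Matrix (Fin n) (Fin k) ℝ)
    (hmin : ∀ g : Fin k → ℝ,
      ∑ i, |h i| ≤ (∑ i, |h i + A.mulVec g i|) + ∑ j, |B.mulVec g j|)
    (g : Fin k → ℝ) :
    -(∑ j, |B.mulVec g j|) ≤ ∑ i, v i * A.mulVec g i := by
  set a := A.mulVec g with ha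
  set b := B.mulVec g with hb
  obtain ⟨t, ht, hta⟩ : ∃ t > 0, ∀ i, t * |a i| < |h i| := by
    rcases isEmpty_or_nonempty (Fin m) with hm | hm
    · exact ⟨1, one_pos, fun i => (hm.false i).elim⟩
    · refine ⟨Finset.univ.inf' univ_nonempty (fun i => |h i| / (|a i| + 1)), ?_, ?_⟩
      · rw [gt_iff_lt, Finset.lt_inf'_iff]
        intro i _
        have := abs_pos.mpr (hh i)
        positivity
      · intro i
        have h1 : Finset.univ.inf' univ_nonempty (fun i => |h i| / (|a i| + 1))
            ≤ |h i| / (|a i| + 1) := Finset.inf'_le _ (mem_univ i)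
        calc Finset.univ.inf' univ_nonempty (fun i => |h i| / (|a i| + 1)) * |a i|
            ≤ (|h i| / (|a i| + 1)) * |a i| :=
              mul_le_mul_of_nonneg_right h1 (abs_nonneg _)
          _ < |h i| := by
              rw [div_mul_eq_mul_div, div_lt_iff₀ (by positivity)]
              have := abs_pos.mpr (hh i)
              nlinarith [abs_nonneg (a i)]
  have habs : ∀ i, |h i + t * a i| = |h i| + t * (v i * a i) := by
    intro i
    have h2 := hta i
    have h3 : t * a i ≤ t * |a i| := mul_le_mul_of_nonneg_left (le_abs_self _) ht.le
    have h4 : -(t * |a i|) ≤ t * a i := by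
      have := mul_le_mul_of_nonneg_left (neg_abs_le (a i)) ht.le
      linarith
    rcases (hh i).lt_or_gt with hi | hi
    · have hv' : v i = -1 := by rw [hv i, Real.sign_of_neg hi]
      rw [abs_of_neg hi] at h2
      have hneg : h i + t * a i < 0 := by linarith
      rw [abs_of_neg hneg, abs_of_neg hi, hv']; ring
    · have hv' : v i = 1 := by rw [hv i, Real.sign_of_pos hi]
      rw [abs_of_pos hi] at h2
      have hpos : 0 < h i + t * a i := by linarith
      rw [abs_of_pos hpos, abs_of_pos hi, hv']; ring
  have hm := hmin (t • g)
  rw [Matrix.mulVec_smul, Matrix.mulVec_smul] at hm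
  simp only [Pi.smul_apply, smul_eq_mul, ← ha, ← hb] at hm
  have e1 : ∑ i, |h i + t * a i| = (∑ i, |h i|) + t * ∑ i, v i * a i := by
    simp only [habs]
    rw [Finset.sum_add_distrib, Finset.mul_sum]
  have e2 : ∑ j, |t * b j| = t * ∑ j, |b j| := by
    simp [abs_mul, abs_of_pos ht, Finset.mul_sum]
  rw [e1, e2] at hm
  have h5 : 0 ≤ t * (∑ i, v i * a i + ∑ j, |b j|) := by nlinarith
  have h6 : 0 ≤ ∑ i, v i * a i + ∑ j, |b j| := nonneg_of_mul_nonneg_right h5 ht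
  linarith

open Finset in
/-- Necessity: if `‖h + A g‖₁ + ‖B g‖₁ ≥ ‖h‖₁` for all `g` (with `v` the sign vector of
the everywhere-nonzero `h`), then `|vᵀ A g| ≤ ‖B g‖₁` for all `g`. -/
theorem l1_identifiability_necessary {m n k : ℕ}
    (h : Fin m → ℝ) (hh : ∀ i, h i ≠ 0)
    (v : Fin m → ℝ) (hv : ∀ i, v i = Real.sign (h i))
    (A : Matrix (Fin m) (Fin k) ℝ) (B : Matrix (Fin n) (Fin k) ℝ)
    (hmin : ∀ g : Fin k → ℝ,
      ∑ i, |h i| ≤ (∑ i, |h i + A.mulVec g i|) + ∑ j, |B.mulVec g j|) :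
    ∀ g : Fin k → ℝ, |∑ i, v i * A.mulVec g i| ≤ ∑ j, |B.mulVec g j| := by
  intro g
  rw [abs_le]
  constructor
  · have := l1_identifiability_key h hh v hv A B hmin g
    linarith
  · have := l1_identifiability_key h hh v hv A B hmin (-g)
    simp only [Matrix.mulVec_neg, Pi.neg_apply, mul_neg, abs_neg,
      Finset.sum_neg_distrib] at this
    linarith
end

section
/- (Sufficient condition for ℓp local identifiability.) Let 0 < p < 1, let h ∈ ℝᵐ have all nonzero entries, let A be an m×k real matrix, and let B be an n×k real matrix with trivial kernel. Define v ∈ ℝᵐ by vᵢ = p · sign(hᵢ) · |hᵢ|^{p−1}. If |vᵀ A g| ≤ ‖B g‖₁ for all g ∈ ℝᵏ, then g = 0 is a local minimum of f(g) = ‖h + A g‖ₚᵖ + ‖B g‖ₚᵖ, i.e., there is a neighborhood V of 0 with f(g) ≥ f(0) = ‖h‖ₚᵖ for all g ∈ V. -/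
open Filter in
lemma abs_rpow_hasDerivAt (p : ℝ) {a : ℝ} (ha : a ≠ 0) :
    HasDerivAt (fun x : ℝ => |x| ^ p) (p * Real.sign a * |a| ^ (p - 1)) a := by
  have habs : |a| ≠ 0 := abs_ne_zero.mpr ha
  have h1 : HasDerivAt (fun x : ℝ => x ^ p) (p * |a| ^ (p - 1)) |a| :=
    Real.hasDerivAt_rpow_const (Or.inl habs)
  have h2 := h1.comp a (hasDerivAt_abs ha)
  have : HasDerivAt (fun x : ℝ => |x| ^ p) (p * |a| ^ (p - 1) * (SignType.sign a : ℝ)) a := h2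
  convert this using 1
  rcases ha.lt_or_gt with h | h
  · simp [Real.sign_of_neg h, h]
  · simp [Real.sign_of_pos h, h]

open Finset in
/-- Sufficient condition for `ℓp` local identifiability: with `0 < p < 1`, `h` having
all nonzero entries, `B` with trivial kernel, and `vᵢ = p sign(hᵢ) |hᵢ|^(p−1)`, if
`|vᵀ A g| ≤ ‖B g‖₁` for all `g`, then `g = 0` is a local minimum of
`f(g) = ‖h + A g‖ₚᵖ + ‖B g‖ₚᵖ`. -/
theorem lp_local_min_sufficient {m n k : ℕ} (p : ℝ) (hp0 : 0 < p) (hp1 : p < 1)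
    (h : Fin m → ℝ) (hh : ∀ i, h i ≠ 0)
    (A : Matrix (Fin m) (Fin k) ℝ) (B : Matrix (Fin n) (Fin k) ℝ)
    (hB : ∀ g : Fin k → ℝ, B.mulVec g = 0 → g = 0)
    (v : Fin m → ℝ) (hv : ∀ i, v i = p * Real.sign (h i) * |h i| ^ (p - 1))
    (hcond : ∀ g : Fin k → ℝ, |∑ i, v i * A.mulVec g i| ≤ ∑ j, |B.mulVec g j|) :
    ∃ V ∈ nhds (0 : Fin k → ℝ), ∀ g ∈ V,
      (∑ i, |h i| ^ p) ≤ (∑ i, |h i + A.mulVec g i| ^ p) + ∑ j, |B.mulVec g j| ^ p := by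
  classical
  -- continuous linear maps
  set Amap : (Fin k → ℝ) →L[ℝ] (Fin m → ℝ) := LinearMap.toContinuousLinearMap A.mulVecLin with hAmap
  set ℓ : Fin m → ((Fin k → ℝ) →L[ℝ] ℝ) :=
    fun i => (ContinuousLinearMap.proj i).comp Amap with hℓdef
  have hℓ : ∀ i (g : Fin k → ℝ), ℓ i g = A.mulVec g i := by
    intro i g; simp [hℓdef, hAmap]
  set L : (Fin k → ℝ) →L[ℝ] ℝ := ∑ i, v i • ℓ i with hLdef
  have hLapp : ∀ g : Fin k → ℝ, L g = ∑ i, v i * A.mulVec g i := by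
    intro g
    simp [hLdef, ContinuousLinearMap.sum_apply, hℓ]
  set F : (Fin k → ℝ) → ℝ := fun g => ∑ i, |h i + A.mulVec g i| ^ p with hFdef
  have hF0 : F 0 = ∑ i, |h i| ^ p := by
    simp [hFdef, Matrix.mulVec_zero]
  -- derivative of F at 0
  have hderiv : HasFDerivAt F L 0 := by
    rw [hLdef]
    apply HasFDerivAt.fun_sum
    intro i _
    have h1 : HasFDerivAt (fun g : Fin k → ℝ => h i + A.mulVec g i) (ℓ i) 0 := by
      have := (hasFDerivAt_const (h i) (0 : Fin k → ℝ)).add (ℓ i).hasFDerivAt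
      simp only [zero_add] at this
      exact this.congr_of_eventuallyEq
        (Filter.Eventually.of_forall fun g => by simp [hℓ])
    have h2 : HasDerivAt (fun x : ℝ => |x| ^ p) (v i) (h i + A.mulVec 0 i) := by
      rw [hv i]
      simpa [Matrix.mulVec_zero] using abs_rpow_hasDerivAt p (hh i)
    exact h2.comp_hasFDerivAt 0 h1
  -- antilipschitz constant for B
  obtain ⟨K, hK0, hK⟩ := LinearMap.exists_antilipschitzWith B.mulVecLin
    (LinearMap.ker_eq_bot'.mpr (by simpa [Matrix.mulVecLin_apply] using hB))
  have hKpos : (0:ℝ) < K := hK0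
  have hKB : ∀ g : Fin k → ℝ, ‖g‖ ≤ K * ∑ j, |B.mulVec g j| := by
    intro g
    have h1 : ‖g‖ ≤ K * ‖B.mulVecLin g‖ := by
      simpa using hK.le_mul_dist g 0
    refine h1.trans (mul_le_mul_of_nonneg_left ?_ (le_of_lt hKpos))
    rw [Matrix.mulVecLin_apply]
    refine (pi_norm_le_iff_of_nonneg (Finset.sum_nonneg fun j _ => abs_nonneg _)).mpr fun j => ?_
    simpa using Finset.single_le_sum (f := fun j => |B.mulVec g j|)
      (fun j _ => abs_nonneg _) (Finset.mem_univ j)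
  -- constants
  set ε : ℝ := ((3:ℝ)/2) ^ (1/(p-1)) with hεdef
  have hε0 : 0 < ε := Real.rpow_pos_of_pos (by norm_num) _
  have hεp : ε ^ (p-1) = 3/2 := by
    rw [hεdef, ← Real.rpow_mul (by norm_num : (0:ℝ) ≤ 3/2)]
    rw [one_div_mul_cancel (by linarith : p - 1 ≠ 0), Real.rpow_one]
  set κ : ℝ := 1/(2*K) with hκdef
  have hκ0 : 0 < κ := by positivity
  -- eventual bounds
  have hlo : ∀ᶠ g : (Fin k → ℝ) in nhds 0, ‖F g - F 0 - L g‖ ≤ κ * ‖g‖ := by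
    have := hderiv.isLittleO.def hκ0
    simpa using this
  have hsmall : ∀ᶠ g : (Fin k → ℝ) in nhds 0, ∀ j, |B.mulVec g j| ≤ ε := by
    rw [Filter.eventually_all]
    intro j
    have hc : Continuous fun g : Fin k → ℝ => |B.mulVec g j| := by
      have : Continuous fun g : Fin k → ℝ => B.mulVec g j := by
        simp only [Matrix.mulVec, dotProduct]
        exact continuous_finset_sum _ fun l _ => (continuous_const.mul (continuous_apply l))
      exact this.abs
    have ht : Filter.Tendsto (fun g : Fin k → ℝ => |B.mulVec g j|) (nhds 0) (nhds 0) := by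
      have := hc.tendsto 0
      simpa [Matrix.mulVec_zero] using this
    exact (ht.eventually_lt_const hε0).mono fun g hg => hg.le
  refine ⟨{g | ‖F g - F 0 - L g‖ ≤ κ * ‖g‖ ∧ ∀ j, |B.mulVec g j| ≤ ε}, hlo.and hsmall, ?_⟩
  rintro g ⟨hg1, hg2⟩
  set S : ℝ := ∑ j, |B.mulVec g j| with hSdef
  have hS0 : 0 ≤ S := Finset.sum_nonneg fun j _ => abs_nonneg _
  have hFg : F 0 + L g - κ * ‖g‖ ≤ F g := by
    have := (abs_le.mp (by simpa using hg1)).1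
    linarith
  have hLg : -S ≤ L g := by
    have h1 := hcond g
    rw [← hLapp] at h1
    have := (abs_le.mp h1).1
    linarith
  have hBp : (3/2) * S ≤ ∑ j, |B.mulVec g j| ^ p := by
    rw [hSdef, Finset.mul_sum]
    refine Finset.sum_le_sum fun j _ => ?_
    rcases eq_or_lt_of_le (abs_nonneg (B.mulVec g j)) with h0 | h0
    · rw [← h0]
      simp [Real.zero_rpow (ne_of_gt hp0)]
    · have hle : |B.mulVec g j| ≤ ε := hg2 j
      have h1 : ε ^ (p-1) ≤ |B.mulVec g j| ^ (p-1) :=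
        Real.rpow_le_rpow_of_nonpos h0 hle (by linarith)
      calc (3:ℝ)/2 * |B.mulVec g j| = ε ^ (p-1) * |B.mulVec g j| := by rw [hεp]
        _ ≤ |B.mulVec g j| ^ (p-1) * |B.mulVec g j| :=
            mul_le_mul_of_nonneg_right h1 (abs_nonneg _)
        _ = |B.mulVec g j| ^ p := by
            rw [← Real.rpow_add_one (ne_of_gt h0), sub_add_cancel]
  have hgS : ‖g‖ ≤ K * S := hKB g
  have hκg : κ * ‖g‖ ≤ S / 2 := by
    have h1 : κ * ‖g‖ ≤ κ * (K * S) := mul_le_mul_of_nonneg_left hgS hκ0.le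
    have h2 : κ * ((K : ℝ) * S) = S / 2 := by
      rw [hκdef]; field_simp
    linarith
  rw [← hF0]
  have : F 0 + L g - κ * ‖g‖ + (3/2) * S ≤ F g + ∑ j, |B.mulVec g j| ^ p :=
    add_le_add hFg hBp
  have hgoal : F 0 ≤ F 0 + L g - κ * ‖g‖ + (3/2) * S := by linarith
  exact le_trans hgoal this
end
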